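/- Let D ≥ 1 and let E : Fin D → ℝ satisfy the 2nd no-resonance condition. Let U_t be the D×D diagonal complex matrix with diagonal entries exp(−i·E_j·t). Then for every complex matrix A indexed by (Fin D × Fin D) × (Fin D × Fin D) (an operator on ℂ^D ⊗ ℂ^D), the limit lim_{T→∞} (1/T) ∫₀^T (U_t ⊗ U_t) A (U_t ⊗ U_t)^† dt exists and equals ∑_{i,k} e_{ik} e_{ik}^† A e_{ik} e_{ik}^† + ∑_{i,k} e_{ik} e_{ik}^† A e_{ki} e_{ki}^† − ∑_i e_{ii} e_{ii}^† A e_{ii} e_{ii}^†, where e_{ik} denotes the standard basis vector of ℂ^D ⊗ ℂ^D labeled by the pair (i,k). -/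

import Mathlib

open Filter MeasureTheory Matrix
open scoped Kronecker

/-- The `k`-th no-resonance condition for a family of energy levels `E : Fin D → ℝ`. -/
def NoResonance (D k : ℕ) (E : Fin D → ℝ) : Prop :=
  ∀ α β : Fin k → Fin D, (∑ j, E (α j)) = (∑ j, E (β j)) →
    ∃ σ : Equiv.Perm (Fin k), β = α ∘ σ

lemma std_mul_entry {n : Type*} [DecidableEq n] [Fintype n] (a b p q : n)
    (A : Matrix n n ℂ) :
    (Matrix.single a a (1:ℂ) * A * Matrix.single b b 1 : Matrix n n ℂ) p q =
      if p = a ∧ q = b then A a b else 0 := by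
  by_cases hp : p = a
  · subst hp
    rw [Matrix.mul_assoc, Matrix.single_mul_apply_same]
    by_cases hq : q = b
    · subst hq; rw [Matrix.mul_single_apply_same]; simp
    · rw [Matrix.mul_single_apply_of_ne (hbj := hq)]; simp [hq]
  · rw [Matrix.mul_assoc, Matrix.single_mul_apply_of_ne (h := hp)]
    simp [hp]

lemma exp_combine (a b c d t : ℝ) :
    (Complex.exp (-(Complex.I * a * t)) * Complex.exp (-(Complex.I * b * t))) *
      star (Complex.exp (-(Complex.I * c * t)) * Complex.exp (-(Complex.I * d * t)))
    = Complex.exp (-(Complex.I * ((a + b - (c + d) : ℝ)) * t)) := by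
  rw [← Complex.exp_add, Complex.star_def, _root_.map_mul, ← Complex.exp_conj, ← Complex.exp_conj,
    ← Complex.exp_add, ← Complex.exp_add]
  congr 1
  simp only [map_neg, _root_.map_mul, Complex.conj_I, Complex.conj_ofReal]
  push_cast
  ring

lemma sum1 {D : ℕ} (A : Matrix (Fin D × Fin D) (Fin D × Fin D) ℂ) (p q : Fin D × Fin D) :
    (∑ i : Fin D, ∑ k : Fin D, (if p = (i,k) ∧ q = (i,k) then A (i,k) (i,k) else 0))
      = if q = p then A p q else 0 := by
  have step : ∀ i k : Fin D, (if p = (i,k) ∧ q = (i,k) then A (i,k) (i,k) else 0)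
      = if (i,k) = p then (if q = p then A p q else 0) else 0 := by
    intro i k
    by_cases h : (i,k) = p
    · subst h
      by_cases hq : q = (i,k) <;> simp [hq]
    · have h' : ¬ (p = (i,k)) := fun hh => h hh.symm
      simp [h, h']
  simp_rw [step, Prod.ext_iff, ite_and]
  simp [Finset.sum_ite_eq, Finset.sum_ite_eq']

lemma sum2 {D : ℕ} (A : Matrix (Fin D × Fin D) (Fin D × Fin D) ℂ) (p q : Fin D × Fin D) :
    (∑ i : Fin D, ∑ k : Fin D, (if p = (i,k) ∧ q = (k,i) then A (i,k) (k,i) else 0))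
      = if q = (p.2, p.1) then A p q else 0 := by
  have step : ∀ i k : Fin D, (if p = (i,k) ∧ q = (k,i) then A (i,k) (k,i) else 0)
      = if (i,k) = p then (if q = (p.2, p.1) then A p q else 0) else 0 := by
    intro i k
    by_cases h : (i,k) = p
    · subst h
      by_cases hq : q = (k,i) <;> simp [hq]
    · have h' : ¬ (p = (i,k)) := fun hh => h hh.symm
      simp [h, h']
  simp_rw [step, Prod.ext_iff, ite_and]
  simp [Finset.sum_ite_eq, Finset.sum_ite_eq']

lemma sum3 {D : ℕ} (A : Matrix (Fin D × Fin D) (Fin D × Fin D) ℂ) (p q : Fin D × Fin D) :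
    (∑ i : Fin D, (if p = (i,i) ∧ q = (i,i) then A (i,i) (i,i) else 0))
      = if q = p ∧ p.2 = p.1 then A p q else 0 := by
  have step : ∀ i : Fin D, (if p = (i,i) ∧ q = (i,i) then A (i,i) (i,i) else 0)
      = if i = p.1 then (if q = p ∧ p.2 = p.1 then A p q else 0) else 0 := by
    intro i
    by_cases h : i = p.1
    · subst h
      by_cases h2 : p.2 = p.1
      · have hp : p = (p.1, p.1) := by
          rw [Prod.ext_iff]; exact ⟨rfl, h2⟩
        by_cases hq : q = p
        · simp [← hp, hq, h2]
        · simp [← hp, hq, h2]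
      · have hp : ¬ (p = (p.1, p.1)) := by
          rw [Prod.ext_iff]; simp [h2]
        simp [hp, h2]
    · have hp : ¬ (p = (i, i)) := by
        rw [Prod.ext_iff]; intro hh; exact h hh.1.symm
      simp [hp, h]
  simp_rw [step]
  simp [Finset.sum_ite_eq, Finset.sum_ite_eq']

lemma resonance_iff {D : ℕ} (E : Fin D → ℝ) (hNR : NoResonance D 2 E)
    (p q : Fin D × Fin D) :
    E p.1 + E p.2 - (E q.1 + E q.2) = 0 ↔ (q = p ∨ q = (p.2, p.1)) := by
  constructor
  · intro h
    obtain ⟨σ, hσ⟩ := hNR ![p.1, p.2] ![q.1, q.2]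
      (by simp [Fin.sum_univ_two]; linarith)
    have h0 := congrFun hσ 0
    have h1 := congrFun hσ 1
    simp only [Function.comp_apply, Matrix.cons_val_zero, Matrix.cons_val_one,
      Matrix.head_cons] at h0 h1
    have ha : ∀ j : Fin 2, j = 0 ∨ j = 1 := by decide
    have hne : σ 0 ≠ σ 1 := fun hh => by
      have := σ.injective hh; exact absurd this (by decide)
    rcases ha (σ 0) with hs0 | hs0 <;> rcases ha (σ 1) with hs1 | hs1
    · exact absurd (hs0.trans hs1.symm) hne
    · left
      rw [hs0] at h0; rw [hs1] at h1
      simp only [Matrix.cons_val_zero, Matrix.cons_val_one, Matrix.head_cons] at h0 h1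
      exact Prod.ext h0 h1
    · right
      rw [hs0] at h0; rw [hs1] at h1
      simp only [Matrix.cons_val_zero, Matrix.cons_val_one, Matrix.head_cons] at h0 h1
      exact Prod.ext h0 h1
    · exact absurd (hs0.trans hs1.symm) hne
  · rintro (h | h) <;> rw [h] <;> simp <;> ring



lemma avg_tendsto (ω : ℝ) (c : ℂ) :
    Tendsto (fun T : ℝ => (1/T : ℂ) * ∫ t in (0:ℝ)..T, c * Complex.exp (-(Complex.I * ω * t)))
      atTop (nhds (if ω = 0 then c else 0)) := by
  by_cases hω : ω = 0
  · subst hω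
    simp only [if_pos rfl, Complex.ofReal_zero, mul_zero, zero_mul, mul_zero, neg_zero,
      Complex.exp_zero, mul_one, intervalIntegral.integral_const, sub_zero, smul_eq_mul]
    apply Tendsto.congr' _ tendsto_const_nhds
    filter_upwards [eventually_gt_atTop (0:ℝ)] with T hT
    have hT' : (T:ℂ) ≠ 0 := Complex.ofReal_ne_zero.mpr hT.ne'
    field_simp
    simp [Complex.real_smul, mul_comm]
  · rw [if_neg hω]
    have hc : (-(Complex.I * ω) : ℂ) ≠ 0 :=
      neg_ne_zero.mpr (mul_ne_zero Complex.I_ne_zero (Complex.ofReal_ne_zero.mpr hω))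
    have key : ∀ T : ℝ, (∫ t in (0:ℝ)..T, c * Complex.exp (-(Complex.I * ω * t)))
        = c * ((Complex.exp (-(Complex.I * ω) * T) - 1) / (-(Complex.I * ω))) := by
      intro T
      rw [intervalIntegral.integral_const_mul]
      congr 1
      have h2 : ∀ t : ℝ, (-(Complex.I * ω * t) : ℂ) = (-(Complex.I * ω)) * t := by
        intro t; ring
      simp_rw [h2]
      rw [integral_exp_mul_complex hc]
      simp
    simp_rw [key]
    have hbd : ∀ᶠ T : ℝ in atTop,
        ‖(1/T : ℂ) * (c * ((Complex.exp (-(Complex.I * ω) * T) - 1) / (-(Complex.I * ω))))‖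
          ≤ |1/T| * (‖c‖ * (2 / ‖(Complex.I * (ω:ℂ))‖)) := by
      filter_upwards with T
      rw [norm_mul]
      gcongr
      · simp [abs_inv]
      rw [norm_mul, norm_div, norm_neg]
      gcongr
      calc ‖Complex.exp (-(Complex.I * ω) * T) - 1‖
          ≤ ‖Complex.exp (-(Complex.I * ω) * T)‖ + ‖(1:ℂ)‖ := norm_sub_le _ _
        _ ≤ 2 := by
            rw [Complex.norm_exp]
            have : (-(Complex.I * ω) * T : ℂ).re = 0 := by simp
            simp [this]; norm_num
    have hlim : Tendsto (fun T : ℝ => |1/T| * (‖c‖ * (2 / ‖(Complex.I * (ω:ℂ))‖)))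
        atTop (nhds 0) := by
      have h : Tendsto (fun T:ℝ => T⁻¹) atTop (nhds 0) := tendsto_inv_atTop_zero
      have h2 : Tendsto (fun T:ℝ => |1/T|) atTop (nhds 0) := by simpa using h.abs
      simpa using h2.mul_const (‖c‖ * (2 / ‖(Complex.I * (ω:ℂ))‖))
    exact squeeze_zero_norm' hbd hlim

/-- Second Hamiltonian twirling identity: under the 2nd no-resonance condition, the
infinite-time average of `(Uₜ ⊗ Uₜ) A (Uₜ ⊗ Uₜ)ᴴ` exists entrywise and equals
`∑_{i,k} e_{ik}e_{ik}ᴴ A e_{ik}e_{ik}ᴴ + ∑_{i,k} e_{ik}e_{ik}ᴴ A e_{ki}e_{ki}ᴴ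
  − ∑_i e_{ii}e_{ii}ᴴ A e_{ii}e_{ii}ᴴ`. -/
theorem second_hamiltonian_twirling_identity
    (D : ℕ) (hD : 1 ≤ D) (E : Fin D → ℝ) (hNR : NoResonance D 2 E)
    (U : ℝ → Matrix (Fin D) (Fin D) ℂ)
    (hU : ∀ t, U t = Matrix.diagonal fun j => Complex.exp (-(Complex.I * (E j : ℂ) * (t : ℂ))))
    (A : Matrix (Fin D × Fin D) (Fin D × Fin D) ℂ) :
    ∀ p q : Fin D × Fin D,
      Tendsto
        (fun T : ℝ => (1 / T : ℂ) *
          ∫ t in (0:ℝ)..T, ((U t ⊗ₖ U t) * A * (U t ⊗ₖ U t)ᴴ) p q)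
        atTop
        (nhds
          ((((∑ i : Fin D, ∑ k : Fin D, Matrix.single (i, k) (i, k) (1 : ℂ) * A *
                Matrix.single (i, k) (i, k) (1 : ℂ))
            + (∑ i : Fin D, ∑ k : Fin D, Matrix.single (i, k) (i, k) (1 : ℂ) * A *
                Matrix.single (k, i) (k, i) (1 : ℂ))
            - (∑ i : Fin D, Matrix.single (i, i) (i, i) (1 : ℂ) * A *
                Matrix.single (i, i) (i, i) (1 : ℂ)) :
              Matrix (Fin D × Fin D) (Fin D × Fin D) ℂ)) p q)) := by
  intro p q
  set ω : ℝ := E p.1 + E p.2 - (E q.1 + E q.2) with hω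
  -- entrywise formula for the evolved matrix
  have hent : ∀ t : ℝ, ((U t ⊗ₖ U t) * A * (U t ⊗ₖ U t)ᴴ) p q
      = A p q * Complex.exp (-(Complex.I * (ω : ℂ) * (t : ℂ))) := by
    intro t
    rw [hU, Matrix.diagonal_kronecker_diagonal, Matrix.diagonal_conjTranspose,
      Matrix.mul_diagonal, Matrix.diagonal_mul]
    simp only [Pi.star_apply]
    rw [mul_right_comm]
    rw [exp_combine (E p.1) (E p.2) (E q.1) (E q.2) t]
    rw [mul_comm]
  -- value of the right-hand side entry
  have hval :
      ((((∑ i : Fin D, ∑ k : Fin D, Matrix.single (i, k) (i, k) (1 : ℂ) * A *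
            Matrix.single (i, k) (i, k) (1 : ℂ))
        + (∑ i : Fin D, ∑ k : Fin D, Matrix.single (i, k) (i, k) (1 : ℂ) * A *
            Matrix.single (k, i) (k, i) (1 : ℂ))
        - (∑ i : Fin D, Matrix.single (i, i) (i, i) (1 : ℂ) * A *
            Matrix.single (i, i) (i, i) (1 : ℂ)) :
          Matrix (Fin D × Fin D) (Fin D × Fin D) ℂ)) p q)
      = if ω = 0 then A p q else 0 := by
    have hiff := resonance_iff E hNR p q
    simp only [Matrix.sub_apply, Matrix.add_apply, Matrix.sum_apply, std_mul_entry]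
    rw [sum1, sum2, sum3]
    by_cases h : ω = 0
    · rw [if_pos h]
      rcases hiff.mp h with hq | hq
      · by_cases hq2 : q = (p.2, p.1)
        · have hp : p.2 = p.1 := by
            have hx : p = (p.2, p.1) := hq ▸ hq2
            exact (Prod.ext_iff.mp hx).1.symm
          rw [if_pos hq, if_pos hq2, if_pos ⟨hq, hp⟩]
          ring
        · have hp : ¬ (p.2 = p.1) := by
            intro hh
            apply hq2
            rw [hq, Prod.ext_iff]
            exact ⟨hh.symm, hh⟩
          rw [if_pos hq, if_neg hq2, if_neg (fun hh => hp hh.2)]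
          ring
      · by_cases hq1 : q = p
        · have hp : p.2 = p.1 := by
            have hx : p = (p.2, p.1) := hq1 ▸ hq
            exact (Prod.ext_iff.mp hx).1.symm
          rw [if_pos hq1, if_pos hq, if_pos ⟨hq1, hp⟩]
          ring
        · rw [if_neg hq1, if_pos hq, if_neg (fun hh => hq1 hh.1)]
          ring
    · rw [if_neg h]
      have h1 : ¬ (q = p) := fun hh => h (hiff.mpr (Or.inl hh))
      have h2 : ¬ (q = (p.2, p.1)) := fun hh => h (hiff.mpr (Or.inr hh))
      simp [h1, h2]
  rw [hval]
  simp_rw [hent]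
  exact avg_tendsto ω (A p q)
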